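/- arXiv:0802.1429 — 12 statements merged into one kernel-verified Lean document; each statement's English description precedes it below -/
import Mathlib

section
/- In an Osborn loop Q, for all x, y ∈ Q one has (x^λ·(x·y))·(x^λ·(x·y^ρ)) = e. -/
/-- A loop: a type with a binary operation `*` and identity `1` such that all
left and right translations are bijective (witnessed by the two division
operations `ldiv` (`x \ z`) and `rdiv` (`z / y`)). -/
class LoopStr (Q : Type*) extends Mul Q, One Q where
  one_mul : ∀ x : Q, 1 * x = x
  mul_one : ∀ x : Q, x * 1 = x
  /-- `ldiv a b = a \ b`, the unique `y` with `a * y = b`. -/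
  ldiv : Q → Q → Q
  /-- `rdiv b a = b / a`, the unique `x` with `x * a = b`. -/
  rdiv : Q → Q → Q
  mul_ldiv : ∀ a b : Q, a * ldiv a b = b
  ldiv_mul : ∀ a b : Q, ldiv a (a * b) = b
  rdiv_mul : ∀ a b : Q, rdiv a b * b = a
  mul_rdiv : ∀ a b : Q, rdiv (a * b) b = a

namespace LoopStr

variable {Q : Type*} [LoopStr Q]

/-- `x^λ`, the unique left inverse of `x` : `x^λ * x = 1`. -/
def lInv (x : Q) : Q := rdiv 1 x

/-- `x^ρ`, the unique right inverse of `x` : `x * x^ρ = 1`. -/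
def rInv (x : Q) : Q := ldiv x 1

/-- A loop is Osborn if `x * (((x^λ * y) * z) * x) = y * (z * x)` for all `x,y,z`. -/
def IsOsborn (Q : Type*) [LoopStr Q] : Prop :=
  ∀ x y z : Q, x * (((lInv x * y) * z) * x) = y * (z * x)

end LoopStr

open LoopStr

section Helpers

variable {Q : Type*} [LoopStr Q]

private lemma my_lInv_mul (x : Q) : lInv x * x = 1 := rdiv_mul 1 x

private lemma my_mul_rInv (x : Q) : x * rInv x = 1 := mul_ldiv x 1

private lemma my_lInv_rInv (x : Q) : lInv (rInv x) = x := by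
  have h := mul_rdiv x (rInv x)
  rw [my_mul_rInv] at h
  exact h

private lemma my_lcancel {a b c : Q} (h : a * b = a * c) : b = c := by
  have h2 := congrArg (ldiv a) h
  rwa [ldiv_mul, ldiv_mul] at h2

private lemma my_rcancel {a b c : Q} (h : b * a = c * a) : b = c := by
  have h2 := congrArg (fun t => rdiv t a) h
  simp only [mul_rdiv] at h2
  exact h2

end Helpers

/-- in an Osborn loop, `(x^λ·(x·y))·(x^λ·(x·y^ρ)) = e`. -/
theorem stmt2 (Q : Type*) [LoopStr Q] (h : IsOsborn Q) :
    ∀ x y : Q, (lInv x * (x * y)) * (lInv x * (x * rInv y)) = 1 := by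
  intro x y
  -- Osborn identity at base `rInv x`, using `lInv (rInv x) = x`.
  have Oρ : ∀ a z : Q, rInv x * (((x * a) * z) * rInv x) = a * (z * rInv x) := by
    intro a z
    have h1 := h (rInv x) a z
    rwa [my_lInv_rInv] at h1
  have celem : ∀ z : Q, rInv x * ((x * z) * rInv x) = z * rInv x := by
    intro z
    have h1 := Oρ 1 z
    rwa [LoopStr.mul_one, LoopStr.one_mul] at h1
  have delem : ∀ a : Q, rInv x * (((x * a) * x) * rInv x) = a := by
    intro a
    have h1 := Oρ a x
    rwa [my_mul_rInv, LoopStr.mul_one] at h1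
  -- (N) : (x * (w * x^ρ)) * x = x * w
  have N : ∀ w : Q, (x * (w * rInv x)) * x = x * w := by
    intro w
    have h1 := delem (w * rInv x)
    have h2 := celem w
    exact my_rcancel (my_lcancel (h1.trans h2.symm))
  -- (**) : x * ((x^λ * z) * x) = z * x
  have starstar : ∀ z : Q, x * ((lInv x * z) * x) = z * x := by
    intro z
    have h1 := h x 1 z
    rwa [LoopStr.mul_one, LoopStr.one_mul] at h1
  -- (M) : ((x^λ * (x * w)) * x) * x^ρ = w
  have M : ∀ w : Q, ((lInv x * (x * w)) * x) * rInv x = w := by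
    intro w
    have h1 := N (((lInv x * (x * w)) * x) * rInv x)
    have h2 := N ((lInv x * (x * w)) * x)
    have h3 := starstar (x * w)
    -- h2 : (x * (((x^λ(xw))*x) * x^ρ)) * x = x * ((x^λ(xw))*x)
    -- h3 : x * ((x^λ(xw))*x) = (x*w)*x
    have h4 := h2.trans h3
    exact my_lcancel (my_rcancel h4)
  -- key : (x*y) * ((x^λ * (x * y^ρ)) * x) = x * x
  have key : (x * y) * ((lInv x * (x * rInv y)) * x) = x * x := by
    have h1 := Oρ y ((lInv x * (x * rInv y)) * x)
    rw [M (rInv y), my_mul_rInv] at h1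
    have h2 := celem x
    rw [my_mul_rInv] at h2
    exact my_rcancel (my_lcancel (h1.trans h2.symm))
  have final := h x (x * y) (lInv x * (x * rInv y))
  rw [key] at final
  -- final : x * (((x^λ(xy)) * (x^λ(x y^ρ))) * x) = x * x
  have hx : x * x = x * (1 * x) := by rw [LoopStr.one_mul]
  have h5 := my_lcancel (final.trans hx)
  -- h5 : ((x^λ(xy)) * (x^λ(x y^ρ))) * x = 1 * x
  exact my_rcancel h5
end

section
/- In an Osborn loop Q, for all x, z ∈ Q one has (x^λ·(x·z^λ))·(x^λ·(x·z)) = e. -/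
open LoopStr

/-- in an Osborn loop, `(x^λ·(x·z^λ))·(x^λ·(x·z)) = e`. -/
theorem stmt3 (Q : Type*) [LoopStr Q] (h : IsOsborn Q) :
    ∀ x z : Q, (lInv x * (x * lInv z)) * (lInv x * (x * z)) = 1 := by
  intro x z
  -- right cancellation
  have rcancel : ∀ u v w : Q, u * w = v * w → u = v := by
    intro u v w huv
    calc u = rdiv (u * w) w := (mul_rdiv u w).symm
    _ = rdiv (v * w) w := by rw [huv]
    _ = v := mul_rdiv v w
  set t : Q := rInv x with ht
  have hxt : x * t = 1 := mul_ldiv x 1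
  have hli : lInv t = x := by
    have h1 : rdiv (x * t) t = x := mul_rdiv x t
    rw [hxt] at h1
    exact h1
  have hlz : lInv z * z = 1 := rdiv_mul 1 z
  -- F2 : ∀ u, t * ((x * u) * t) = u * t
  have F2 : ∀ u : Q, t * ((x * u) * t) = u * t := by
    intro u
    have h2 := h t u 1
    rw [hli, LoopStr.mul_one, LoopStr.one_mul] at h2
    exact h2
  -- F3 (KEY) : t * (((x*z)*x)*t) = z
  have F3 : t * (((x * z) * x) * t) = z := by
    have h3 := h t z x
    rw [hli, hxt, LoopStr.mul_one] at h3
    exact h3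
  set b : Q := lInv x * (x * z) with hb
  -- x * (b * x) = (x*z) * x
  have F4a : x * (b * x) = (x * z) * x := by
    have h4 := h x (x * z) 1
    rw [LoopStr.mul_one, LoopStr.one_mul] at h4
    exact h4
  -- (b*x)*t = z
  have F4 : (b * x) * t = z := by
    rw [← F2 (b * x), F4a, F3]
  -- F5 : t * (((x * lInv z) * (b*x)) * t) = 1
  have F5 : t * (((x * lInv z) * (b * x)) * t) = 1 := by
    have h5 := h t (lInv z) (b * x)
    rw [hli, F4, hlz] at h5
    exact h5
  set a : Q := lInv x * (x * lInv z) with ha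
  -- F6 : x * ((a*b)*x) = (x * lInv z) * (b*x)
  have F6 : x * ((a * b) * x) = (x * lInv z) * (b * x) := h x (x * lInv z) b
  -- F7 : ((a*b)*x)*t = 1
  have F7 : ((a * b) * x) * t = 1 := by
    rw [← F2 ((a * b) * x), F6, F5]
  -- conclude
  have F8 : (a * b) * x = x := by
    have h8 : ((a * b) * x) * t = x * t := by rw [F7, hxt]
    exact rcancel _ _ _ h8
  have F9 : (a * b) * x = 1 * x := by rw [F8, LoopStr.one_mul]
  exact rcancel _ _ _ F9
end

section
/- In an Osborn loop Q, for all x, y ∈ Q one has (x^λ·(x·y))^ρ = x^λ·(x·y^ρ). -/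
open LoopStr

/-- in an Osborn loop, `(x^λ·(x·y))^ρ = x^λ·(x·y^ρ)`. -/
theorem stmt4 (Q : Type*) [LoopStr Q] (h : IsOsborn Q) :
    ∀ x y : Q, rInv (lInv x * (x * y)) = lInv x * (x * rInv y) := by
  intro x y
  have h' : ∀ a b c : Q, a * (((rdiv 1 a * b) * c) * a) = b * (c * a) := h
  -- abbreviations (written out in full): r = ldiv x 1 (= x^ρ), k = ldiv (x*y) (x*x)
  have f1 : x * ldiv x 1 = 1 := mul_ldiv x 1
  have f2 : rdiv (1 : Q) (ldiv x 1) = x := by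
    have h0 := mul_rdiv x (ldiv x 1)
    rw [f1] at h0
    exact h0
  have f3 : (x * y) * ldiv (x * y) (x * x) = x * x := mul_ldiv (x * y) (x * x)
  -- D : r * ((x*x)*r) = 1
  have f4 : ldiv x 1 * ((x * x) * ldiv x 1) = 1 := by
    have hD := h' (ldiv x 1) 1 x
    rw [LoopStr.mul_one, f2, LoopStr.one_mul, f1] at hD
    exact hD
  -- B : y * (k*r) = 1
  have f5 : y * (ldiv (x * y) (x * x) * ldiv x 1) = 1 := by
    have hB := h' (ldiv x 1) y (ldiv (x * y) (x * x))
    rw [f2, f3, f4] at hB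
    exact hB.symm
  -- k * r = y^ρ
  have f6 : ldiv (x * y) (x * x) * ldiv x 1 = ldiv y 1 := by
    have h0 := ldiv_mul y (ldiv (x * y) (x * x) * ldiv x 1)
    rw [f5] at h0
    exact h0.symm
  -- C : r * ((x*k)*r) = k*r
  have f7 : ldiv x 1 * ((x * ldiv (x * y) (x * x)) * ldiv x 1)
      = ldiv (x * y) (x * x) * ldiv x 1 := by
    have hC := h' (ldiv x 1) (ldiv (x * y) (x * x)) 1
    rw [f2, LoopStr.mul_one, LoopStr.one_mul] at hC
    exact hC
  -- F : r * (((x*y^ρ)*x)*r) = y^ρ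
  have f8 : ldiv x 1 * (((x * ldiv y 1) * x) * ldiv x 1) = ldiv y 1 := by
    have hF := h' (ldiv x 1) (ldiv y 1) x
    rw [f2, f1, LoopStr.mul_one] at hF
    exact hF
  -- (x*y^ρ)*x = x*k
  have f9 : (x * ldiv y 1) * x = x * ldiv (x * y) (x * x) := by
    have e1 : ldiv x 1 * ((x * ldiv (x * y) (x * x)) * ldiv x 1)
        = ldiv x 1 * (((x * ldiv y 1) * x) * ldiv x 1) := f7.trans (f6.trans f8.symm)
    have h1 := ldiv_mul (ldiv x 1) ((x * ldiv (x * y) (x * x)) * ldiv x 1)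
    rw [e1] at h1
    have h2 := ldiv_mul (ldiv x 1) (((x * ldiv y 1) * x) * ldiv x 1)
    have e2 : (x * ldiv (x * y) (x * x)) * ldiv x 1
        = ((x * ldiv y 1) * x) * ldiv x 1 := h1.symm.trans h2
    have h3 := mul_rdiv (x * ldiv (x * y) (x * x)) (ldiv x 1)
    rw [e2] at h3
    have h4 := mul_rdiv ((x * ldiv y 1) * x) (ldiv x 1)
    exact h4.symm.trans h3
  -- E : rdiv k x = x^λ * (x * y^ρ)
  have f10 : rdiv (ldiv (x * y) (x * x)) x = rdiv 1 x * (x * ldiv y 1) := by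
    have hE := h' x (x * ldiv y 1) 1
    rw [LoopStr.mul_one, LoopStr.one_mul, f9] at hE
    -- hE : x * ((rdiv 1 x * (x * ldiv y 1)) * x) = x * ldiv (x*y) (x*x)
    have h5 := ldiv_mul x ((rdiv 1 x * (x * ldiv y 1)) * x)
    rw [hE] at h5
    have h6 := ldiv_mul x (ldiv (x * y) (x * x))
    have e3 : (rdiv 1 x * (x * ldiv y 1)) * x = ldiv (x * y) (x * x) := h5.symm.trans h6
    have h7 := mul_rdiv (rdiv 1 x * (x * ldiv y 1)) x
    rw [e3] at h7
    exact h7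
  -- A : (x^λ * (x*y)) * rdiv k x = 1
  have f11 : (rdiv 1 x * (x * y)) * rdiv (ldiv (x * y) (x * x)) x = 1 := by
    have hA := h' x (x * y) (rdiv (ldiv (x * y) (x * x)) x)
    rw [rdiv_mul, f3] at hA
    -- hA : x * (((rdiv 1 x * (x*y)) * rdiv k x) * x) = x * x
    have h8 := ldiv_mul x (((rdiv 1 x * (x * y)) * rdiv (ldiv (x * y) (x * x)) x) * x)
    rw [hA] at h8
    have h9 := ldiv_mul x x
    have e4 : ((rdiv 1 x * (x * y)) * rdiv (ldiv (x * y) (x * x)) x) * x = x :=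
      h8.symm.trans h9
    have h10 := mul_rdiv ((rdiv 1 x * (x * y)) * rdiv (ldiv (x * y) (x * x)) x) x
    rw [e4] at h10
    have h11 : rdiv x x = (1 : Q) := by
      have h12 := mul_rdiv (1 : Q) x
      rw [LoopStr.one_mul] at h12
      exact h12
    exact h10.symm.trans h11
  -- conclude
  have hfin := ldiv_mul (rdiv 1 x * (x * y)) (rdiv (ldiv (x * y) (x * x)) x)
  rw [f11] at hfin
  -- hfin : ldiv (rdiv 1 x * (x*y)) 1 = rdiv k x
  show ldiv (rdiv 1 x * (x * y)) 1 = rdiv 1 x * (x * ldiv y 1)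
  rw [hfin]
  exact f10
end

section
/- In an Osborn loop Q, for every x ∈ Q one has x^ρ = (x^λ·x^λ)·x. -/
open LoopStr

/-- in an Osborn loop, `x^ρ = (x^λ·x^λ)·x`. -/
theorem stmt5 (Q : Type*) [LoopStr Q] (h : IsOsborn Q) :
    ∀ x : Q, rInv x = (lInv x * lInv x) * x := by
  intro x
  have hx : lInv x * x = 1 := rdiv_mul 1 x
  have h1 := h x 1 (lInv x)
  rw [LoopStr.mul_one, LoopStr.one_mul, hx] at h1
  have : rInv x = ldiv x (x * ((lInv x * lInv x) * x)) := by rw [h1]; rfl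
  rw [this, ldiv_mul]
end

section
/- In an Osborn loop Q, for every x ∈ Q one has (x^ρ)^ρ = (x·x)·x^ρ. -/
open LoopStr

/-- in an Osborn loop, `(x^ρ)^ρ = (x·x)·x^ρ`. -/
theorem stmt6 (Q : Type*) [LoopStr Q] (h : IsOsborn Q) :
    ∀ x : Q, rInv (rInv x) = (x * x) * rInv x := by
  intro x
  have hx : x * rInv x = 1 := mul_ldiv x 1
  have hl : lInv (rInv x) = x := by
    have := mul_rdiv x (rInv x)
    rw [hx] at this
    exact this
  have h1 := h (rInv x) 1 x
  rw [hl, LoopStr.mul_one, LoopStr.one_mul, hx] at h1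
  calc rInv (rInv x) = ldiv (rInv x) 1 := rfl
    _ = ldiv (rInv x) (rInv x * (x * x * rInv x)) := by rw [h1]
    _ = x * x * rInv x := ldiv_mul _ _
end

section
/- In an Osborn loop Q, for every x ∈ Q one has (x^λ)^λ = x^λ·(x·x). -/
open LoopStr

/-- in an Osborn loop, `(x^λ)^λ = x^λ·(x·x)`. -/
theorem stmt7 (Q : Type*) [LoopStr Q] (h : IsOsborn Q) :
    ∀ x : Q, lInv (lInv x) = lInv x * (x * x) := by
  intro x
  set u := lInv x * (x * x) with hu
  have hlx : lInv x * x = 1 := rdiv_mul 1 x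
  have h1 : x * ((u * lInv x) * x) = (x * x) * (lInv x * x) := h x (x * x) (lInv x)
  rw [hlx, LoopStr.mul_one] at h1
  -- left cancel x
  have h2 : (u * lInv x) * x = x := by
    have := ldiv_mul x ((u * lInv x) * x)
    rw [h1, ldiv_mul] at this
    exact this.symm
  -- right cancel x
  have h3 : u * lInv x = 1 := by
    have := mul_rdiv (u * lInv x) x
    rw [h2] at this
    have h4 : rdiv x x = (1 : Q) := by
      have := mul_rdiv (1 : Q) x
      rwa [LoopStr.one_mul] at this
    rw [h4] at this
    exact this.symm
  have : lInv (lInv x) = rdiv (u * lInv x) (lInv x) := by rw [h3]; rfl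
  rw [this, mul_rdiv]
end

section
/- In an Osborn loop Q, for all x, y ∈ Q one has (x·(x^ρ·y^ρ))^λ = (x·(x^ρ·y^λ))^ρ. -/
open LoopStr

/- ### Auxiliary loop lemmas -/

namespace OsbornAux

variable {Q : Type*} [LoopStr Q]

theorem mul_left_cancel {a b c : Q} (h : a * b = a * c) : b = c := by
  have := congrArg (LoopStr.ldiv a) h
  rwa [LoopStr.ldiv_mul, LoopStr.ldiv_mul] at this

theorem mul_right_cancel {a b c : Q} (h : b * a = c * a) : b = c := by
  have := congrArg (fun t => LoopStr.rdiv t a) h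
  simpa [LoopStr.mul_rdiv] using this

theorem rInv_eq {a b : Q} (h : a * b = 1) : rInv a = b := by
  have := LoopStr.ldiv_mul a b
  rw [h] at this
  rw [rInv]
  exact this

theorem lInv_eq {a b : Q} (h : a * b = 1) : lInv b = a := by
  have := LoopStr.mul_rdiv a b
  rw [h] at this
  rw [lInv]
  exact this

theorem mul_rInv (a : Q) : a * rInv a = 1 := LoopStr.mul_ldiv a 1

theorem lInv_mul (a : Q) : lInv a * a = 1 := LoopStr.rdiv_mul 1 a

theorem lInv_rInv (a : Q) : lInv (rInv a) = a := lInv_eq (mul_rInv a)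

theorem rInv_lInv (a : Q) : rInv (lInv a) = a := rInv_eq (lInv_mul a)

/- ### Osborn consequences -/

variable (h : IsOsborn Q)
include h

/-- `x * ((x^λ * z) * x) = z * x`. -/
theorem hA (x z : Q) : x * ((lInv x * z) * x) = z * x := by
  have := h x 1 z
  rwa [LoopStr.mul_one, LoopStr.one_mul] at this

/-- `(x^λ * x^λ) * x = x^ρ`. -/
theorem L1 (x : Q) : (lInv x * lInv x) * x = rInv x := by
  have h1 := hA h x (lInv x)
  rw [lInv_mul] at h1
  exact (rInv_eq h1).symm

/-- Key identity: `x^ρ * (((x*u)*z) * x^ρ) = u * (z * x^ρ)`. -/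
theorem K (x u z : Q) : rInv x * (((x * u) * z) * rInv x) = u * (z * rInv x) := by
  have := h (rInv x) u z
  rwa [lInv_rInv] at this

/-- `x^ρ * (((x*u)*x) * x^ρ) = u`. -/
theorem E (x u : Q) : rInv x * (((x * u) * x) * rInv x) = u := by
  have := K h x u x
  rwa [mul_rInv, LoopStr.mul_one] at this

/-- `x^ρ * ((x*u) * x^ρ) = u * x^ρ`. -/
theorem K1 (x u : Q) : rInv x * ((x * u) * rInv x) = u * rInv x := by
  have := K h x u 1
  rwa [LoopStr.mul_one, LoopStr.one_mul] at this

/-- `(x * (x^ρ * (w * x^ρ))) * x = w`. -/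
theorem E2 (x w : Q) : (x * (rInv x * (w * rInv x))) * x = w := by
  have h1 := E h x (rInv x * (w * rInv x))
  -- h1 : x^ρ * (((x * (x^ρ * (w*x^ρ))) * x) * x^ρ) = x^ρ * (w * x^ρ)
  have h2 : rInv x * ((((x * (rInv x * (w * rInv x))) * x) * rInv x)) =
      rInv x * (w * rInv x) := h1
  have h3 := mul_left_cancel h2
  exact mul_right_cancel h3

/-- `(x * (w * x^ρ)) * x = x * w`. -/
theorem C3'' (x w : Q) : (x * (w * rInv x)) * x = x * w := by
  have h1 := E h x (w * rInv x)
  -- h1 : x^ρ * (((x * (w * x^ρ)) * x) * x^ρ) = w * x^ρ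
  have h2 := K1 h x w
  -- h2 : x^ρ * ((x * w) * x^ρ) = w * x^ρ
  have h3 : rInv x * (((x * (w * rInv x)) * x) * rInv x)
      = rInv x * ((x * w) * rInv x) := by rw [h1, h2]
  exact mul_right_cancel (mul_left_cancel h3)

/-- Claim 3: `x * (x^ρ * w) = x^λ * (x * w)`. -/
theorem C3 (x w : Q) : x * (rInv x * w) = lInv x * (x * w) := by
  set t := LoopStr.rdiv w (rInv x) with ht
  have hw : t * rInv x = w := LoopStr.rdiv_mul w (rInv x)
  -- (x * (x^ρ * w)) * x = t  by E2
  have e1 : (x * (rInv x * w)) * x = t := by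
    rw [← hw]; exact E2 h x t
  -- (x*w)*x = x*t  by C3''
  have e2 : (x * w) * x = x * t := by
    conv_lhs => rw [← hw]
    exact C3'' h x t
  -- x * ((x^λ * (x*w)) * x) = (x*w) * x = x*t  by hA
  have e3 : x * ((lInv x * (x * w)) * x) = x * t := by
    rw [hA h x (x * w)]; exact e2
  have e4 : (lInv x * (x * w)) * x = t := mul_left_cancel e3
  rw [← e4] at e1
  exact mul_right_cancel e1

/-- `S1 : ((x * (x^ρ * y^ρ)) * x^ρ) * x^ρρ = y^ρ`. -/
theorem S1 (x y : Q) :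
    ((x * (rInv x * rInv y)) * rInv x) * rInv (rInv x) = rInv y := by
  -- rewrite  x * (x^ρ * y^ρ) = x^ρ... using C3 at base x^ρ:
  -- C3 (rInv x) w : x^ρ * (x^ρρ * w) = x^ρλ... careful: lInv (rInv x) = x.
  have c : rInv x * (rInv (rInv x) * rInv y) = x * (rInv x * rInv y) := by
    have := C3 h (rInv x) (rInv y)
    rwa [lInv_rInv] at this
  -- E at base x^ρ : x^ρρ * (((x^ρ * u) * x^ρ) * x^ρρ) = u, with u := x^ρρ * y^ρ?  No:
  -- E h (rInv x) u : rInv (rInv x) * (((rInv x * u) * rInv x) * rInv (rInv x)) = u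
  have e := E h (rInv x) (rInv (rInv x) * rInv y)
  rw [c] at e
  -- e : x^ρρ * (((x * (x^ρ * y^ρ)) * x^ρ) * x^ρρ) = x^ρρ * y^ρ
  have e' : rInv (rInv x) * (((x * (rInv x * rInv y)) * rInv x) * rInv (rInv x))
      = rInv (rInv x) * rInv y := e
  exact mul_left_cancel e'

/-- MAIN: `(x * (x^ρ * y)) * (x * (x^ρ * y^ρ)) = 1`. -/
theorem main (x y : Q) :
    (x * (rInv x * y)) * (x * (rInv x * rInv y)) = 1 := by
  set B := x * (rInv x * rInv y) with hB
  set x2 := rInv (rInv x) with hx2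
  -- q1 := (x^ρ * y) * (B * x^ρ) satisfies x2 * (q1 * x2) = 1 :
  have hq1 : x2 * (((rInv x * y) * (B * rInv x)) * x2) = 1 := by
    have k' := K h (rInv x) y (B * rInv x)
    -- k' : x2 * (((x^ρ * y) * (B*x^ρ)) * x2) = y * ((B*x^ρ) * x2)
    rw [k']
    have s1 : (B * rInv x) * x2 = rInv y := S1 h x y
    rw [s1, mul_rInv]
  -- q2 := x^ρ * x^ρ satisfies the same:
  have hq2 : x2 * ((rInv x * rInv x) * x2) = 1 := by
    have l1 := L1 h x2
    have : lInv x2 = rInv x := lInv_eq (mul_rInv (rInv x))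
    rw [this] at l1
    rw [l1, mul_rInv]
  have hq : (rInv x * y) * (B * rInv x) = rInv x * rInv x :=
    mul_right_cancel (mul_left_cancel (hq1.trans hq2.symm))
  -- Now K with u := x^ρ * y, z := B :
  have m1 := K h x (rInv x * y) B
  -- m1 : x^ρ * (((x * (x^ρ*y)) * B) * x^ρ) = (x^ρ*y) * (B * x^ρ)
  rw [hq] at m1
  -- also x^ρ * (1 * x^ρ) = x^ρ * x^ρ
  have m2 : rInv x * ((1 : Q) * rInv x) = rInv x * rInv x := by
    rw [LoopStr.one_mul]
  have := mul_right_cancel (mul_left_cancel (m1.trans m2.symm))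
  exact this

end OsbornAux

/-- in an Osborn loop, `(x·(x^ρ·y^ρ))^λ = (x·(x^ρ·y^λ))^ρ`. -/
theorem stmt12 (Q : Type*) [LoopStr Q] (h : IsOsborn Q) :
    ∀ x y : Q, lInv (x * (rInv x * rInv y)) = rInv (x * (rInv x * lInv y)) := by
  intro x y
  have h1 : lInv (x * (rInv x * rInv y)) = x * (rInv x * y) :=
    OsbornAux.lInv_eq (OsbornAux.main h x y)
  have h2 : rInv (x * (rInv x * lInv y)) = x * (rInv x * y) := by
    have := OsbornAux.main h x (lInv y)
    rw [OsbornAux.rInv_lInv] at this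
    exact OsbornAux.rInv_eq this
  rw [h1, h2]
end

section
/- In a conjugacy closed loop (CC-loop) Q, the following conditions are pairwise equivalent: (i) Q is a 3-PAPL, i.e. (x·x)·x = x·(x·x) for all x; (ii) x^ρ = x^λ for all x; (iii) Q has the left self inverse property, x^λ·(x·x) = x for all x; (iv) Q has the right self inverse property, (x·x)·x^ρ = x for all x. -/
open LoopStr

/-- in a CC-loop the conditions 3-PAPL, `x^ρ = x^λ`, LSIP and
RSIP are pairwise equivalent. -/
theorem stmt14 (Q : Type*) [LoopStr Q]
    (hcc1 : ∀ x y z : Q, x * (y * z) = rdiv (x * y) x * (x * z))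
    (hcc2 : ∀ x y z : Q, (z * y) * x = (z * x) * ldiv x (y * x)) :
    [ (∀ x : Q, (x * x) * x = x * (x * x)),
      (∀ x : Q, rInv x = lInv x),
      (∀ x : Q, lInv x * (x * x) = x),
      (∀ x : Q, (x * x) * rInv x = x) ].TFAE := by

  -- basic inverse facts
  have hri : ∀ x : Q, x * rInv x = 1 := fun x => LoopStr.mul_ldiv x 1
  have hli : ∀ x : Q, lInv x * x = 1 := fun x => LoopStr.rdiv_mul 1 x
  -- (B1): x * (x^ρ * x) = x^λ * (x * x)
  have B1 : ∀ x : Q, x * (rInv x * x) = lInv x * (x * x) := by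
    intro x
    have := hcc1 x (rInv x) x
    rwa [hri x] at this
  -- (C): (x^λ * y) * x = x \ (y * x)
  have C : ∀ x y : Q, (lInv x * y) * x = LoopStr.ldiv x (y * x) := by
    intro x y
    have := hcc2 x y (lInv x)
    rwa [hli x, LoopStr.one_mul] at this
  -- (D1): (x * x^λ) * x = (x * x) * x^ρ
  have D1 : ∀ x : Q, (x * lInv x) * x = (x * x) * rInv x := by
    intro x
    have := hcc2 x (lInv x) x
    rwa [hli x] at this
  tfae_have 1 → 3 := by
    intro h x
    have hC := C x (x * x)
    rw [h x, LoopStr.ldiv_mul] at hC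
    have := LoopStr.mul_rdiv (lInv x * (x * x)) x
    rw [hC, LoopStr.mul_rdiv] at this
    exact this.symm
  tfae_have 3 → 1 := by
    intro h x
    have hC := C x (x * x)
    rw [h x] at hC
    have := LoopStr.mul_ldiv x ((x * x) * x)
    rw [← hC] at this
    exact this.symm
  tfae_have 3 → 2 := by
    intro h x
    have hB := B1 x
    rw [h x] at hB
    have h1 : rInv x * x = 1 := by
      have := LoopStr.ldiv_mul x (rInv x * x)
      rw [hB] at this
      calc rInv x * x = LoopStr.ldiv x x := this.symm
        _ = 1 := by
          have := LoopStr.ldiv_mul x 1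
          rwa [LoopStr.mul_one] at this
    have := LoopStr.mul_rdiv (rInv x) x
    rw [h1] at this
    exact this.symm
  tfae_have 2 → 3 := by
    intro h x
    have hB := B1 x
    rw [h x, hli x, LoopStr.mul_one] at hB
    exact hB.symm
  tfae_have 2 → 4 := by
    intro h x
    have hD := D1 x
    rw [← h x, hri x, LoopStr.one_mul] at hD
    exact hD.symm
  tfae_have 4 → 2 := by
    intro h x
    have hD := D1 x
    rw [h x] at hD
    have h1 : x * lInv x = 1 := by
      have := LoopStr.mul_rdiv (x * lInv x) x
      rw [hD] at this
      calc x * lInv x = LoopStr.rdiv x x := this.symm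
        _ = 1 := by
          have := LoopStr.mul_rdiv 1 x
          rwa [LoopStr.one_mul] at this
    have := LoopStr.ldiv_mul x (lInv x)
    rw [h1] at this
    exact this
  tfae_finish
end

section
/- If an Osborn loop Q has exponent 2, i.e. x·x = e for all x ∈ Q, then Q is an abelian group: the operation · is commutative and associative. -/
open LoopStr

/-- an Osborn loop of exponent 2 is an abelian group. -/
theorem stmt15 (Q : Type*) [LoopStr Q] (h : IsOsborn Q)
    (hexp : ∀ x : Q, x * x = 1) :
    (∀ x y : Q, x * y = y * x) ∧ (∀ x y z : Q, (x * y) * z = x * (y * z)) := by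
  have hlinv : ∀ x : Q, lInv x = x := by
    intro x
    unfold lInv
    rw [← hexp x]
    exact mul_rdiv x x
  have hrdiv_self : ∀ x : Q, rdiv x x = (1 : Q) := by
    intro x
    have := mul_rdiv (1 : Q) x
    rwa [LoopStr.one_mul] at this
  have key : ∀ x z : Q, x * (z * x) = z := by
    intro x z
    have ho := h x (z * x) z
    rw [hlinv, hexp (z * x)] at ho
    -- ho : x * (((x * (z * x)) * z) * x) = 1
    have h2 : ((x * (z * x)) * z) * x = x := by
      have h2' := congrArg (ldiv x) ho
      rw [ldiv_mul, ← hexp x, ldiv_mul] at h2'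
      exact h2'
    have h3 : (x * (z * x)) * z = 1 := by
      have h3' := congrArg (fun t => rdiv t x) h2
      simp only [mul_rdiv] at h3'
      rw [hrdiv_self x] at h3'
      exact h3'
    have h4 := congrArg (fun t => rdiv t z) h3
    simp only [mul_rdiv] at h4
    rw [← hexp z, mul_rdiv] at h4
    exact h4
  have comm : ∀ x y : Q, x * y = y * x := by
    intro x y
    have ho := h x y 1
    rw [hlinv, LoopStr.mul_one, LoopStr.one_mul, key x (x * y)] at ho
    exact ho
  have P : ∀ x y z : Q, (x * y) * z = y * (z * x) := by
    intro x y z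
    have ho := h x y z
    rw [hlinv, key x ((x * y) * z)] at ho
    exact ho
  refine ⟨comm, fun x y z => ?_⟩
  rw [P x y z, comm y (z * x), P z x y]
end

section
/- An Osborn loop Q that is flexible, i.e. satisfies x·(y·x) = (x·y)·x for all x,y ∈ Q, is a Moufang loop, i.e. satisfies (x·y)·(z·x) = (x·(y·z))·x for all x,y,z ∈ Q. -/
open LoopStr

/-- a flexible Osborn loop is a Moufang loop. -/
theorem stmt16 (Q : Type*) [LoopStr Q] (h : IsOsborn Q)
    (hflex : ∀ x y : Q, x * (y * x) = (x * y) * x) :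
    ∀ x y z : Q, (x * y) * (z * x) = (x * (y * z)) * x := by
  intro x y z
  -- right cancellation
  have cancel : ∀ a b c : Q, a * c = b * c → a = b := by
    intro a b c hab
    have := congrArg (fun t => rdiv t c) hab
    simpa [mul_rdiv] using this
  -- left inverse property: x * (x^λ * y) = y
  have lip : ∀ a b : Q, a * (lInv a * b) = b := by
    intro a b
    have h1 := h a b 1
    rw [LoopStr.mul_one, LoopStr.one_mul, hflex] at h1
    exact cancel _ _ _ h1
  -- x * x^λ = 1
  have mri : ∀ a : Q, a * lInv a = 1 := by
    intro a
    have := lip a 1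
    rwa [LoopStr.mul_one] at this
  -- (x^λ)^λ = x
  have lli : ∀ a : Q, lInv (lInv a) = a := by
    intro a
    have : lInv (lInv a) = rdiv (a * lInv a) (lInv a) := by rw [mri]; rfl
    rw [this, mul_rdiv]
  -- x^λ * (x * y) = y
  have lip' : ∀ a b : Q, lInv a * (a * b) = b := by
    intro a b
    have := lip (lInv a) b
    rwa [lli] at this
  have h2 := h x (x * y) z
  rw [lip', hflex] at h2
  exact h2.symm
end

section
/- A commutative Osborn loop Q (one in which x·y = y·x for all x,y ∈ Q) is a commutative Moufang loop, i.e. it satisfies the Moufang identity (x·y)·(z·x) = (x·(y·z))·x for all x,y,z ∈ Q. -/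
open LoopStr

/-- a commutative Osborn loop is a commutative Moufang loop. -/
theorem stmt17 (Q : Type*) [LoopStr Q] (h : IsOsborn Q)
    (hcomm : ∀ x y : Q, x * y = y * x) :
    ∀ x y z : Q, (x * y) * (z * x) = (x * (y * z)) * x := by
  -- right cancellation
  have rcancel : ∀ a b x : Q, a * x = b * x → a = b := by
    intro a b x hab
    have := congrArg (fun t => rdiv t x) hab
    simpa [mul_rdiv] using this
  -- from Osborn with z = 1: (x^λ * y) * x = y
  have key : ∀ x y : Q, (lInv x * y) * x = y := by
    intro x y
    have h1 := h x y 1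
    simp only [LoopStr.mul_one, LoopStr.one_mul] at h1
    -- h1 : x * ((lInv x * y) * x) = y * x
    rw [hcomm x ((lInv x * y) * x)] at h1
    exact rcancel _ _ _ h1
  -- left inverse property: x^λ * (x * w) = w
  have lip : ∀ x w : Q, lInv x * (x * w) = w := by
    intro x w
    have h1 := key x (x * w)
    exact rcancel _ _ _ (h1.trans (hcomm x w))
  intro x y z
  have h1 := h x (x * y) z
  rw [lip x y] at h1
  -- h1 : x * ((y * z) * x) = (x * y) * (z * x)
  rw [← h1, hcomm (y * z) x, hcomm (x * (y * z)) x]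
end

section
/- Let Q be a loop with the weak inverse property, i.e. for all x,y,z ∈ Q, (x·y)·z = e implies x·(y·z) = e. Then Q is a universal WIPL — that is, for all f,g ∈ Q the principal isotope (Q,∘) with x∘y = (x/g)·(f\y), which is a loop with identity element f·g, again has the weak inverse property (for all x,y,z ∈ Q, (x∘y)∘z = f·g implies x∘(y∘z) = f·g) — if and only if Q is an Osborn loop. -/
open LoopStr

/-! ### Auxiliary basic loop lemmas -/

section Basic

variable {P : Type*} [LoopStr P]

theorem lpLdivUnique {a y b : P} (h : a * y = b) : ldiv a b = y := by
  rw [← h, ldiv_mul]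

theorem lpRdivUnique {y a b : P} (h : y * a = b) : rdiv b a = y := by
  rw [← h, mul_rdiv]

theorem lpMulLeftCancel {a b c : P} (h : a * b = a * c) : b = c := by
  rw [← ldiv_mul a b, h, ldiv_mul]

theorem lpLInvMul (x : P) : lInv x * x = 1 := rdiv_mul 1 x

theorem lpMulRInv (x : P) : x * rInv x = 1 := mul_ldiv x 1

theorem lpRInvLInv (x : P) : rInv (lInv x) = x := lpLdivUnique (lpLInvMul x)

theorem lpLInvRInv (x : P) : lInv (rInv x) = x := lpRdivUnique (lpMulRInv x)

theorem lpOneLdiv (b : P) : ldiv 1 b = b := lpLdivUnique (LoopStr.one_mul b)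

theorem lpRdivSelf (g : P) : rdiv g g = 1 := lpRdivUnique (LoopStr.one_mul g)

end Basic

/-! ### WIP consequences -/

section Wip

variable {P : Type*} [LoopStr P]
variable (hw : ∀ x y z : P, (x * y) * z = 1 → x * (y * z) = 1)

include hw

theorem lpWip' : ∀ x y z : P, x * (y * z) = 1 → (x * y) * z = 1 := by
  intro x y z h
  have h1 : (x * y) * ldiv (x * y) 1 = 1 := mul_ldiv _ _
  have h2 := hw x y (ldiv (x * y) 1) h1
  have h3 : y * ldiv (x * y) 1 = y * z := lpMulLeftCancel (h2.trans h.symm)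
  have h4 : ldiv (x * y) 1 = z := lpMulLeftCancel h3
  rw [← h4]; exact h1

theorem lpW1 : ∀ x y : P, y * rInv (x * y) = rInv x := by
  intro x y
  exact (lpLdivUnique (hw x y (rInv (x * y)) (lpMulRInv (x * y)))).symm

theorem lpW2 : ∀ x y : P, lInv (x * y) * x = lInv y := by
  intro x y
  have h := lpWip' hw (lInv (x * y)) x y (lpLInvMul (x * y))
  exact (lpRdivUnique h).symm

theorem lpW3 : ∀ a b : P, ldiv a b = rInv (lInv b * a) := by
  intro a b
  have h := lpW2 hw a (ldiv a b)
  rw [mul_ldiv] at h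
  rw [h, lpRInvLInv]

end Wip

/-! ### The Osborn identity and the key one-parameter autotopism identity (D) -/

section Osborn

variable {P : Type*} [LoopStr P]

/-- Osborn implies the (D)-identity `(s*p)*(q/sᵖ) = s*((p*q)/sᵖ)`. -/
theorem lpDOfO (hO : IsOsborn P) :
    ∀ s p q : P, (s * p) * rdiv q (rInv s) = s * rdiv (p * q) (rInv s) := by
  -- Bryant-like identity: x*(m*x) = ((lInv x)\m) * x
  have hBr : ∀ x m : P, x * (m * x) = ldiv (lInv x) m * x := by
    intro x m
    have h := hO x (ldiv (lInv x) m) 1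
    rwa [mul_ldiv, LoopStr.mul_one, LoopStr.one_mul] at h
  have hEid : ∀ x p z : P, ldiv (lInv x) ((lInv x * p) * z) * x = p * (z * x) := by
    intro x p z
    rw [← hBr x ((lInv x * p) * z)]
    exact hO x p z
  intro s p q
  have h := hEid (rInv s) p (rdiv q (rInv s))
  rw [lpLInvRInv, rdiv_mul] at h
  have h2 := lpRdivUnique h
  rw [h2, mul_ldiv]

/-- The (D)-identity implies the `Eid` identity. -/
theorem lpEidOfD (hD : ∀ s p q : P, (s * p) * rdiv q (rInv s) = s * rdiv (p * q) (rInv s)) :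
    ∀ s p z : P, ldiv s ((s * p) * z) * rInv s = p * (z * rInv s) := by
  intro s p z
  have h := hD s p (z * rInv s)
  rw [mul_rdiv] at h
  have h2 := lpLdivUnique h.symm
  rw [h2, rdiv_mul]

/-- The (D)-identity implies Osborn. -/
theorem lpOOfD (hD : ∀ s p q : P, (s * p) * rdiv q (rInv s) = s * rdiv (p * q) (rInv s)) :
    IsOsborn P := by
  have hBr : ∀ x m : P, x * (m * x) = ldiv (lInv x) m * x := by
    intro x m
    have h := lpEidOfD hD (lInv x) (rInv (lInv x)) m
    rw [lpMulRInv, LoopStr.one_mul, lpRInvLInv] at h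
    exact h.symm
  intro x y z
  have e := lpEidOfD hD (lInv x) y z
  rw [lpRInvLInv] at e
  exact (hBr x ((lInv x * y) * z)).trans e

end Osborn

/-! ### The family of right-isotope WIP statements (F) -/

section FD

variable {P : Type*} [LoopStr P]
variable (hw : ∀ x y z : P, (x * y) * z = 1 → x * (y * z) = 1)

include hw

/-- (D) implies every `(1,g)`-principal isotope has the WIP. -/
theorem lpFOfD (hD : ∀ s p q : P, (s * p) * rdiv q (rInv s) = s * rdiv (p * q) (rInv s)) :
    ∀ g x y z : P, rdiv (rdiv x g * y) g * z = g →
      rdiv x g * (rdiv y g * z) = g := by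
  intro g x y z hprem
  have hz : ldiv (rdiv (rdiv x g * y) g) g = z := lpLdivUnique hprem
  have h1 := hD (lInv g) (rdiv x g) y
  rw [lpRInvLInv] at h1
  have h2 := lpW1 hw (lInv g * rdiv x g) (rdiv y g)
  rw [h1, ← lpW3 hw, ← lpW3 hw, hz] at h2
  -- h2 : rdiv y g * z = ldiv (rdiv x g) g
  rw [h2, mul_ldiv]

/-- The family (F) implies the (D)-identity. -/
theorem lpDOfF (hF : ∀ g x y z : P, rdiv (rdiv x g * y) g * z = g →
      rdiv x g * (rdiv y g * z) = g) :
    ∀ s p q : P, (s * p) * rdiv q (rInv s) = s * rdiv (p * q) (rInv s) := by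
  have hE : ∀ g p q : P, (lInv g * p) * rdiv q g = lInv g * rdiv (p * q) g := by
    intro g p q
    have hprem : rdiv (rdiv (p * g) g * q) g * ldiv (rdiv (rdiv (p * g) g * q) g) g = g :=
      mul_ldiv _ _
    have hc := hF g (p * g) q (ldiv (rdiv (rdiv (p * g) g * q) g) g) hprem
    simp only [mul_rdiv] at hc
    have h2 : ldiv p g = rdiv q g * ldiv (rdiv (p * q) g) g := lpLdivUnique hc
    have hX : rdiv (lInv g * rdiv (p * q) g) (rdiv q g) * rdiv q g
        = lInv g * rdiv (p * q) g := rdiv_mul _ _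
    have hW := lpW1 hw (rdiv (lInv g * rdiv (p * q) g) (rdiv q g)) (rdiv q g)
    rw [hX] at hW
    have h3 : rInv (lInv g * rdiv (p * q) g) = ldiv (rdiv (p * q) g) g :=
      (lpW3 hw (rdiv (p * q) g) g).symm
    rw [h3, ← h2] at hW
    -- hW : ldiv p g = rInv X
    have h4 : rInv (lInv g * p) = rInv (rdiv (lInv g * rdiv (p * q) g) (rdiv q g)) := by
      rw [← lpW3 hw p g]; exact hW
    have h5 : lInv g * p = rdiv (lInv g * rdiv (p * q) g) (rdiv q g) := by
      have h6 := congrArg lInv h4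
      rwa [lpLInvRInv, lpLInvRInv] at h6
    rw [h5]; exact hX
  intro s p q
  have h := hE (rInv s) p q
  rwa [lpLInvRInv] at h

end FD

/-! ### The mirror Osborn identity and the opposite loop -/

section Mirror

variable {P : Type*} [LoopStr P]

/-- Osborn implies the mirror Osborn identity. -/
theorem lpOstarOf (hO : IsOsborn P) :
    ∀ x y z : P, (x * (z * (y * rInv x))) * x = (x * z) * y := by
  have hD := lpDOfO hO
  have hEid := lpEidOfD hD
  -- N'' : ldiv x (y*z) * rInv x = ldiv x y * (z * rInv x)
  have hN : ∀ x y z : P, ldiv x (y * z) * rInv x = ldiv x y * (z * rInv x) := by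
    intro x y z
    have h := hEid x (ldiv x y) z
    rwa [mul_ldiv] at h
  -- MIR2 : (s*p)*s = s * (p / rInv s)
  have hM2 : ∀ s p : P, (s * p) * s = s * rdiv p (rInv s) := by
    intro s p
    have h := hD s p 1
    have e : rdiv 1 (rInv s) = s := lpLInvRInv s
    rwa [e, LoopStr.mul_one] at h
  -- MIR3 : ldiv x (w*x) = rdiv (ldiv x w) (rInv x)
  have hM3 : ∀ x w : P, ldiv x (w * x) = rdiv (ldiv x w) (rInv x) := by
    intro x w
    have h := hM2 x (ldiv x w)
    rw [mul_ldiv] at h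
    exact lpLdivUnique h.symm
  -- MIR : ldiv x (rdiv w x) = ldiv x w * rInv x
  have hMIR : ∀ x w : P, ldiv x (rdiv w x) = ldiv x w * rInv x := by
    intro x w
    have h := hM3 x (rdiv w x)
    rw [rdiv_mul] at h
    rw [h, rdiv_mul]
  intro x y z
  have h1 := hN x (x * z) y
  rw [ldiv_mul] at h1
  have h3 := (hMIR x ((x * z) * y)).trans h1
  rw [← h3, mul_ldiv, rdiv_mul]

/-- The opposite loop structure. -/
def lpOpStr (P : Type*) [LoopStr P] : LoopStr P where
  mul a b := b * a
  one := 1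
  one_mul x := LoopStr.mul_one x
  mul_one x := LoopStr.one_mul x
  ldiv a b := rdiv b a
  rdiv b a := ldiv a b
  mul_ldiv a b := rdiv_mul b a
  ldiv_mul a b := mul_rdiv b a
  rdiv_mul a b := mul_ldiv b a
  mul_rdiv a b := ldiv_mul b a

variable (hw : ∀ x y z : P, (x * y) * z = 1 → x * (y * z) = 1)

include hw

/-- WIP + Osborn implies every `(f,1)`-principal isotope has the WIP. -/
theorem lpFstarOf (hO : IsOsborn P) :
    ∀ f x y z : P, (x * ldiv f y) * ldiv f z = f →
      x * ldiv f (y * ldiv f z) = f := by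
  have hwS : ∀ x y z : P, z * (y * x) = 1 → (z * y) * x = 1 := by
    intro x y z h
    exact lpWip' hw z y x h
  have hOS : @IsOsborn P (lpOpStr P) := fun x y z => lpOstarOf hO x y z
  have hDS := @lpDOfO P (lpOpStr P) hOS
  have hFS := @lpFOfD P (lpOpStr P) hwS hDS
  have hCONV : ∀ f x y z : P, x * ldiv f (y * ldiv f z) = f →
      (x * ldiv f y) * ldiv f z = f := fun f x y z h => hFS f z y x h
  intro f x y z hprem
  have h1 : ldiv f (f * ldiv y (f * ldiv x f)) = ldiv y (f * ldiv x f) := ldiv_mul _ _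
  have h4 : x * ldiv f (y * ldiv f (f * ldiv y (f * ldiv x f))) = f := by
    rw [h1, mul_ldiv, ldiv_mul, mul_ldiv]
  have h5 := hCONV f x y (f * ldiv y (f * ldiv x f)) h4
  have h6 : ldiv f (f * ldiv y (f * ldiv x f)) = ldiv f z :=
    lpMulLeftCancel (h5.trans hprem.symm)
  have h7 : f * ldiv y (f * ldiv x f) = z := by
    have e1 := congrArg (fun t => f * t) h6
    simpa only [mul_ldiv] using e1
  rw [← h7]
  exact h4

end Mirror

/-! ### The `(1,g)`-principal isotope as a loop structure -/

/-- The `(1,g)`-principal isotope loop structure: `a ∘ b = (a/g)*b`, identity `g`. -/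
def lpIsoStr {Q : Type*} [LoopStr Q] (g : Q) : LoopStr Q where
  mul a b := rdiv a g * b
  one := g
  one_mul x := by show rdiv g g * x = x; rw [lpRdivSelf, LoopStr.one_mul]
  mul_one a := rdiv_mul a g
  ldiv a b := ldiv (rdiv a g) b
  rdiv b a := rdiv b a * g
  mul_ldiv a b := mul_ldiv (rdiv a g) b
  ldiv_mul a b := ldiv_mul (rdiv a g) b
  rdiv_mul a b := by show rdiv (rdiv a b * g) g * b = a; rw [mul_rdiv]; exact rdiv_mul a b
  mul_rdiv a b := by show rdiv (rdiv a g * b) b * g = a; rw [mul_rdiv]; exact rdiv_mul a g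

/-- Huthnance: a WIPL `Q` is a universal WIPL (every principal
isotope `x∘y = (x/g)·(f\y)`, a loop with identity `f·g`, has the WIP) iff `Q`
is an Osborn loop. -/
theorem stmt19 (Q : Type*) [LoopStr Q]
    (hwip : ∀ x y z : Q, (x * y) * z = 1 → x * (y * z) = 1) :
    (∀ f g x y z : Q,
        rdiv (rdiv x g * ldiv f y) g * ldiv f z = f * g →
        rdiv x g * ldiv f (rdiv y g * ldiv f z) = f * g) ↔
      IsOsborn Q := by
  constructor
  · -- forward: universal WIP implies Osborn
    intro hh
    have hF : ∀ g x y z : Q, rdiv (rdiv x g * y) g * z = g →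
        rdiv x g * (rdiv y g * z) = g := by
      intro g x y z hp
      have h' := hh 1 g x y z
      simp only [lpOneLdiv, LoopStr.one_mul] at h'
      exact h' hp
    exact lpOOfD (lpDOfF hwip hF)
  · -- backward: Osborn implies universal WIP
    intro hO f g x y z
    have hD := lpDOfO hO
    have hF := lpFOfD hwip hD
    -- WIP of the (1,g)-isotope, in the form needed
    have hwip1 : ∀ x y z : Q, rdiv (rdiv x g * y) g * z = g →
        rdiv x g * (rdiv y g * z) = g := hF g
    -- F-family for the (1,g)-isotope, expressed with base-loop operations
    have hF1 : ∀ g₁ x y z : Q,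
        rdiv (rdiv (rdiv (rdiv x g₁ * g) g * y) g₁ * g) g * z = g₁ →
        rdiv (rdiv x g₁ * g) g * (rdiv (rdiv y g₁ * g) g * z) = g₁ := by
      intro g₁ x y z h
      simp only [mul_rdiv] at h ⊢
      exact hF g₁ x y z h
    have hD1 := @lpDOfF Q (lpIsoStr g) hwip1 hF1
    have hO1 := @lpOOfD Q (lpIsoStr g) hD1
    have key :
        rdiv (rdiv x g * ldiv (rdiv (f * g) g) y) g * ldiv (rdiv (f * g) g) z = f * g →
        rdiv x g * ldiv (rdiv (f * g) g) (rdiv y g * ldiv (rdiv (f * g) g) z) = f * g :=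
      @lpFstarOf Q (lpIsoStr g) hwip1 hO1 (f * g) x y z
    simp only [mul_rdiv] at key
    exact key
end
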